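/- Let a : [-π,π] → ℝ be a C¹ function with Fourier coefficients â(k), k ∈ ℤ, and assume that ∑_{k∈ℤ} |â(k) − â(k−1)| ≤ K. Then for every x ∈ [−π,π] one has |a(x)| ≤ (π K)/(2|x|). -/

import Mathlib

open Complex Real

lemma abs_one_sub_exp (x : ℝ) :
    ‖1 - Complex.exp (Complex.I * x)‖ = 2 * |Real.sin (x / 2)| := by
  have h1 : Complex.exp (Complex.I * x) = Complex.cos x + Complex.sin x * Complex.I := by
    rw [mul_comm, Complex.exp_mul_I]
  have h2 : (1 : ℂ) - Complex.exp (Complex.I * x)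
      = Complex.ofReal (1 - Real.cos x) + Complex.ofReal (-Real.sin x) * Complex.I := by
    rw [h1]
    push_cast
    ring
  have habs : ‖1 - Complex.exp (Complex.I * x)‖
      = Real.sqrt ((1 - Real.cos x) ^ 2 + (Real.sin x) ^ 2) := by
    rw [h2, Complex.norm_def, Complex.normSq_add_mul_I]
    ring_nf
  rw [habs]
  have hc : Real.cos x = 1 - 2 * Real.sin (x / 2) ^ 2 := by
    have := Real.cos_two_mul (x / 2)
    have h := Real.sin_sq_add_cos_sq (x / 2)
    have : Real.cos (2 * (x / 2)) = 2 * Real.cos (x / 2) ^ 2 - 1 := this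
    rw [show 2 * (x / 2) = x by ring] at this
    nlinarith
  have : (1 - Real.cos x) ^ 2 + (Real.sin x) ^ 2 = (2 * |Real.sin (x / 2)|) ^ 2 := by
    have hs : Real.sin x ^ 2 = (1 - Real.cos x ^ 2) := by
      have := Real.sin_sq_add_cos_sq x; nlinarith
    rw [mul_pow, _root_.sq_abs]
    nlinarith
  rw [this, Real.sqrt_sq (by positivity)]

theorem stmt0 (a : ℝ → ℂ) (ahat : ℤ → ℂ) (K : ℝ)
    (ha : ContDiff ℝ 1 a)
    (hrep : ∀ x : ℝ, a x = ∑' k : ℤ, ahat k * Complex.exp (Complex.I * (k : ℂ) * (x : ℂ)))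
    (hsum : Summable fun k : ℤ => ‖ahat k - ahat (k - 1)‖)
    (hK : (∑' k : ℤ, ‖ahat k - ahat (k - 1)‖) ≤ K) :
    ∀ x ∈ Set.Icc (-Real.pi) Real.pi, x ≠ 0 →
      ‖a x‖ ≤ Real.pi * K / (2 * |x|) := by
  intro x hx hx0
  have hK0 : 0 ≤ K := le_trans (tsum_nonneg fun k => norm_nonneg _) hK
  set e : ℤ → ℂ := fun k => Complex.exp (Complex.I * (k : ℂ) * (x : ℂ)) with he
  set f : ℤ → ℂ := fun k => ahat k * e k with hf
  set g : ℤ → ℂ := fun k => ahat (k - 1) * e k with hg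
  have habse : ∀ k : ℤ, ‖e k‖ = 1 := by
    intro k
    simp only [he]
    rw [show Complex.I * (k : ℂ) * (x : ℂ) = ((k : ℝ) * x : ℝ) * Complex.I by push_cast; ring]
    exact Complex.norm_exp_ofReal_mul_I _
  have hshift : ∀ k : ℤ, Complex.exp (Complex.I * x) * f k = g (k + 1) := by
    intro k
    simp only [hf, hg, he, add_sub_cancel_right]
    push_cast
    rw [show Complex.I * ((k : ℂ) + 1) * (x : ℂ) = Complex.I * (k : ℂ) * x + Complex.I * x by ring,
      Complex.exp_add]
    ring
  -- key identity : e^{ix} * a x = ∑' g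
  have hmul : Complex.exp (Complex.I * x) * a x = ∑' k : ℤ, g k := by
    rw [hrep x, ← tsum_mul_left]
    calc ∑' k : ℤ, Complex.exp (Complex.I * x) * f k
        = ∑' k : ℤ, g (k + 1) := by exact tsum_congr hshift
      _ = ∑' k : ℤ, g k := (Equiv.addRight (1 : ℤ)).tsum_eq g
  have hdiff : Summable fun k : ℤ => f k - g k := by
    apply Summable.of_norm
    have : ∀ k : ℤ, ‖f k - g k‖ = ‖ahat k - ahat (k - 1)‖ := by
      intro k
      simp only [hf, hg, ← sub_mul]
      rw [norm_mul, habse k, mul_one]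
    exact (summable_congr this).mpr hsum
  have hbound : ‖(1 - Complex.exp (Complex.I * x)) * a x‖ ≤ K := by
    by_cases hS : Summable f
    · have hSg : Summable g := by
        have := hS.sub hdiff
        simpa using this
      have : (1 - Complex.exp (Complex.I * x)) * a x = ∑' k : ℤ, (f k - g k) := by
        rw [sub_mul, one_mul, hmul, hrep x, hS.tsum_sub hSg]
      rw [this]
      calc ‖∑' k : ℤ, (f k - g k)‖ ≤ ∑' k : ℤ, ‖f k - g k‖ := by
            simpa using norm_tsum_le_tsum_norm (hdiff.norm)
        _ = ∑' k : ℤ, ‖ahat k - ahat (k - 1)‖ := by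
            apply tsum_congr; intro k
            simp only [hf, hg, ← sub_mul]
            rw [norm_mul, habse k, mul_one]
        _ ≤ K := hK
    · have hSg : ¬ Summable g := fun hg' =>
        hS ((hg'.add hdiff).congr (fun k => by ring))
      have hfz : (∑' k : ℤ, f k) = 0 := tsum_eq_zero_of_not_summable hS
      have hgz : (∑' k : ℤ, g k) = 0 := tsum_eq_zero_of_not_summable hSg
      have : (1 - Complex.exp (Complex.I * x)) * a x = 0 := by
        rw [sub_mul, one_mul, hmul, hrep x, hfz, hgz, sub_zero]
      rw [this, norm_zero]
      exact hK0
  -- lower bound on |1 - e^{ix}|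
  have hlow : 2 * |x| / Real.pi ≤ ‖1 - Complex.exp (Complex.I * x)‖ := by
    rw [abs_one_sub_exp x]
    have hπ : (0:ℝ) < Real.pi := Real.pi_pos
    have hxpi : |x| ≤ Real.pi := abs_le.mpr ⟨hx.1, hx.2⟩
    have h2 : |x / 2| ≤ Real.pi / 2 := by
      rw [abs_div, _root_.abs_two]; linarith
    have h5 := Real.mul_abs_le_abs_sin h2
    rw [abs_div, _root_.abs_two] at h5
    have h3 : |x| ≤ |Real.sin (x / 2)| * Real.pi := by
      rw [← div_le_iff₀ hπ]
      calc |x| / Real.pi = 2 / Real.pi * (|x| / 2) := by ring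
        _ ≤ _ := h5
    rw [div_le_iff₀ hπ]
    linarith
  have habs : ‖(1 - Complex.exp (Complex.I * x)) * a x‖
      = ‖1 - Complex.exp (Complex.I * x)‖ * ‖a x‖ := norm_mul _ _
  have hxpos : 0 < |x| := abs_pos.mpr hx0
  have hπ : (0:ℝ) < Real.pi := Real.pi_pos
  have key : 2 * |x| / Real.pi * ‖a x‖ ≤ K := by
    calc 2 * |x| / Real.pi * ‖a x‖
        ≤ ‖1 - Complex.exp (Complex.I * x)‖ * ‖a x‖ :=
          mul_le_mul_of_nonneg_right hlow (norm_nonneg _)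
      _ = ‖(1 - Complex.exp (Complex.I * x)) * a x‖ := habs.symm
      _ ≤ K := hbound
  rw [le_div_iff₀ (by positivity)]
  calc ‖a x‖ * (2 * |x|) = (2 * |x| / Real.pi * ‖a x‖) * Real.pi := by
        field_simp
    _ ≤ K * Real.pi := mul_le_mul_of_nonneg_right key hπ.le
    _ = Real.pi * K := mul_comm _ _
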